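/- Fix d ≥ 2, 0 < p⋆ ≤ 1/(2(d+1)), and η₁, η₂ ∈ Δ_d, and let P₁, P₂ be the laws of a length-m trajectory under (M_{η₁}, p) and (M_{η₂}, p) respectively. Let N_{d+1}(x) = ∑_{t=1}^m 1{x_t = d+1}. Then for every n with 1 ≤ n and 2n ≤ m + 1: TV( P₁(· | N_{d+1} = n), P₂(· | N_{d+1} = n) ) ≤ TV( η₁^{⊗n}, η₂^{⊗n} ), where η^{⊗n} is the n-fold product distribution on [d]^n. -/

import Mathlib

open Finset

noncomputable section

/-- A row-stochastic matrix. -/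
def IsStochastic {d : ℕ} (M : Matrix (Fin d) (Fin d) ℝ) : Prop :=
  (∀ i j, 0 ≤ M i j) ∧ ∀ i, ∑ j, M i j = 1

/-- A probability distribution on `Fin d`. -/
def IsDist {d : ℕ} (μ : Fin d → ℝ) : Prop :=
  (∀ i, 0 ≤ μ i) ∧ ∑ i, μ i = 1

/-- Probability of a length-`m` trajectory under the Markov chain `(M, μ)`:
`μ(x₁) ∏_{t=1}^{m-1} M(x_t, x_{t+1})`. -/
def trajP {d m : ℕ} (M : Matrix (Fin d) (Fin d) ℝ) (μ : Fin d → ℝ)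
    (x : Fin m → Fin d) : ℝ :=
  (if h : 0 < m then μ (x ⟨0, h⟩) else 1) *
    ∏ t : Fin (m - 1),
      M (x ⟨t.1, by have h2 := t.2; omega⟩) (x ⟨t.1 + 1, by have h2 := t.2; omega⟩)


/-- The distribution `p` on `[d+1]`: `p(d+1) = p⋆`, `p(i) = (1-p⋆)/d` for `i ∈ [d]`. -/
def pInit (d : ℕ) (ps : ℝ) : Fin (d + 1) → ℝ :=
  fun i => if i.1 = d then ps else (1 - ps) / d

/-- The chain `M_η ∈ G_{p⋆}`: rows `1,…,d` equal `p`, row `d+1` is `(η(1),…,η(d),0)`. -/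
def MG (d : ℕ) (ps : ℝ) (η : Fin d → ℝ) : Matrix (Fin (d + 1)) (Fin (d + 1)) ℝ :=
  Matrix.of fun i j =>
    if i.1 = d then (if h : j.1 = d then 0 else η ⟨j.1, by have h2 := j.2; omega⟩)
    else pInit d ps j

/-- Number of visits to state `d+1` in a trajectory. -/
def Nlast (d m : ℕ) (x : Fin m → Fin (d + 1)) : ℕ :=
  (Finset.univ.filter (fun t => (x t).1 = d)).card

open scoped Classical in
/-- The conditional distribution of a length-`m` trajectory of `(M_η, p)` given the
event `E` (with the convention `0/0 = 0`). -/
def condP {d m : ℕ} (ps : ℝ) (η : Fin d → ℝ)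
    (E : (Fin m → Fin (d + 1)) → Prop) (x : Fin m → Fin (d + 1)) : ℝ :=
  (if E x then trajP (MG d ps η) (pInit d ps) x else 0) /
    ∑ y, if E y then trajP (MG d ps η) (pInit d ps) y else 0

/-- Total variation distance between two distributions on a finite set. -/
def tvDist {S : Type*} [Fintype S] (P Q : S → ℝ) : ℝ := (1 / 2) * ∑ x, |P x - Q x|

/-- The `n`-fold product distribution `η^{⊗n}` on `[d]^n`. -/
def prodP {d : ℕ} (η : Fin d → ℝ) (n : ℕ) (x : Fin n → Fin d) : ℝ := ∏ s, η (x s)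

section AuxDecoupling
open scoped Classical
variable {d m : ℕ}

def Tk (η₁ η₂ : Fin d → ℝ) (k : ℕ) : ℝ := ∑ y : Fin k → Fin d, |prodP η₁ k y - prodP η₂ k y|

lemma sum_prodP (η : Fin d → ℝ) (hη : ∑ i, η i = 1) (k : ℕ) :
    ∑ y : Fin k → Fin d, prodP η k y = 1 := by
  induction k with
  | zero => simp [prodP]
  | succ k ih =>
      rw [← Equiv.sum_comp (Fin.consEquiv (fun _ => Fin d)) (prodP η (k+1)),
        Fintype.sum_prod_type]
      have h : ∀ (v : Fin d) (y : Fin k → Fin d),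
          prodP η (k+1) ((Fin.consEquiv (fun _ => Fin d)) (v, y)) = η v * prodP η k y := by
        intro v y
        simp [prodP, Fin.consEquiv_apply, Fin.prod_univ_succ]
      simp_rw [h]
      rw [← Finset.sum_mul_sum]
      rw [hη, ih, one_mul]

lemma Tk_nonneg (η₁ η₂ : Fin d → ℝ) (k : ℕ) : 0 ≤ Tk η₁ η₂ k :=
  Finset.sum_nonneg fun _ _ => abs_nonneg _

lemma Tk_mono (η₁ η₂ : Fin d → ℝ) (h1 : ∑ i, η₁ i = 1) (h2 : ∑ i, η₂ i = 1) :
    Monotone (Tk η₁ η₂) := by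
  apply monotone_nat_of_le_succ
  intro k
  unfold Tk
  rw [← Equiv.sum_comp (Fin.consEquiv (fun _ => Fin d))
    (fun y => |prodP η₁ (k+1) y - prodP η₂ (k+1) y|), Fintype.sum_prod_type]
  have h : ∀ (v : Fin d) (y : Fin k → Fin d),
      |prodP η₁ (k+1) ((Fin.consEquiv (fun _ => Fin d)) (v, y))
        - prodP η₂ (k+1) ((Fin.consEquiv (fun _ => Fin d)) (v, y))|
      = |η₁ v * prodP η₁ k y - η₂ v * prodP η₂ k y| := by
    intro v y
    simp [prodP, Fin.consEquiv_apply, Fin.prod_univ_succ]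
  simp_rw [h]
  rw [Finset.sum_comm]
  refine Finset.sum_le_sum fun y _ => ?_
  have : prodP η₁ k y - prodP η₂ k y
      = ∑ v : Fin d, (η₁ v * prodP η₁ k y - η₂ v * prodP η₂ k y) := by
    rw [Finset.sum_sub_distrib, ← Finset.sum_mul, ← Finset.sum_mul, h1, h2, one_mul, one_mul]
  rw [this]
  exact Finset.abs_sum_le_sum_abs _ _

lemma sum_restrict (S : Finset (Fin m)) (G : ({ s : Fin m // s ∈ S } → Fin d) → ℝ) :
    ∑ z : Fin m → Fin d, G (fun s => z s.1) =
      (d : ℝ) ^ (m - S.card) * ∑ y : { s : Fin m // s ∈ S } → Fin d, G y := by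
  classical
  rw [← Equiv.sum_comp (Equiv.piEquivPiSubtypeProd (fun i => i ∈ S) (fun _ => Fin d)).symm
      (fun z : Fin m → Fin d => G (fun s => z s.1)), Fintype.sum_prod_type]
  have h1 : ∀ (a : { s : Fin m // s ∈ S } → Fin d) (b : { s : Fin m // ¬ s ∈ S } → Fin d),
      G (fun s => (Equiv.piEquivPiSubtypeProd (fun i => i ∈ S) (fun _ => Fin d)).symm (a, b) s.1)
        = G a := by
    intro a b
    congr 1
    funext s
    rw [Equiv.piEquivPiSubtypeProd_symm_apply, dif_pos s.2]
  simp_rw [h1]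
  have hc : Fintype.card ({ s : Fin m // ¬ s ∈ S } → Fin d) = d ^ (m - S.card) := by
    rw [Fintype.card_fun, Fintype.card_fin, Fintype.card_subtype_compl, Fintype.card_coe,
      Fintype.card_fin]
  simp [Finset.sum_const, hc, nsmul_eq_mul, Finset.mul_sum]

lemma sum_prod_subtype_pair (S : Finset (Fin m)) (η₁ η₂ : Fin d → ℝ) :
    ∑ y : {s : Fin m // s ∈ S} → Fin d,
      |(∏ s : {s : Fin m // s ∈ S}, η₁ (y s)) - ∏ s : {s : Fin m // s ∈ S}, η₂ (y s)|
      = Tk η₁ η₂ S.card := by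
  refine Fintype.sum_equiv (Equiv.arrowCongr S.equivFin (Equiv.refl (Fin d))) _ _ fun y => ?_
  have h : ∀ η : Fin d → ℝ, ∏ s : {s : Fin m // s ∈ S}, η (y s)
      = prodP η S.card ((Equiv.arrowCongr S.equivFin (Equiv.refl (Fin d))) y) := by
    intro η
    unfold prodP
    rw [← Equiv.prod_comp S.equivFin.symm (fun s : {s : Fin m // s ∈ S} => η (y s))]
    simp
  rw [h, h]

lemma sum_prod_subtype_one (S : Finset (Fin m)) (η : Fin d → ℝ) (hη : ∑ i, η i = 1) :
    ∑ y : {s : Fin m // s ∈ S} → Fin d, ∏ s : {s : Fin m // s ∈ S}, η (y s) = 1 := by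
  rw [← sum_prodP η hη S.card]
  refine Fintype.sum_equiv (Equiv.arrowCongr S.equivFin (Equiv.refl (Fin d))) _ _ fun y => ?_
  unfold prodP
  rw [← Equiv.prod_comp S.equivFin.symm (fun s : {s : Fin m // s ∈ S} => η (y s))]
  simp

lemma prod_mem_eq_subtype (S : Finset (Fin m)) (η : Fin d → ℝ) (z : Fin m → Fin d) :
    (∏ s ∈ S, η (z s)) = ∏ s : {s : Fin m // s ∈ S}, η (z s.1) := by
  rw [Finset.univ_eq_attach, Finset.prod_attach S (fun s => η (z s))]

lemma sum_prod_S (S : Finset (Fin m)) (η : Fin d → ℝ) (hη : ∑ i, η i = 1) :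
    ∑ z : Fin m → Fin d, ∏ s ∈ S, η (z s) = (d:ℝ) ^ (m - S.card) := by
  simp_rw [prod_mem_eq_subtype S η]
  rw [sum_restrict S (fun y => ∏ s : {s : Fin m // s ∈ S}, η (y s)),
    sum_prod_subtype_one S η hη, mul_one]

lemma U_eq (S : Finset (Fin m)) (η₁ η₂ : Fin d → ℝ) :
    ∑ z : Fin m → Fin d, |(∏ s ∈ S, η₁ (z s)) - ∏ s ∈ S, η₂ (z s)|
      = (d:ℝ) ^ (m - S.card) * Tk η₁ η₂ S.card := by
  simp_rw [prod_mem_eq_subtype S η₁, prod_mem_eq_subtype S η₂]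
  rw [sum_restrict S (fun y => |(∏ s : {s : Fin m // s ∈ S}, η₁ (y s))
    - ∏ s : {s : Fin m // s ∈ S}, η₂ (y s)|), sum_prod_subtype_pair S η₁ η₂]


lemma fin_eq_last_iff (x : Fin (d + 1)) : x = Fin.last d ↔ x.1 = d := by
  rw [Fin.ext_iff, Fin.val_last]

def isS (w : Fin m → Fin (d + 1)) (s : Fin m) : Prop :=
  0 < s.1 ∧ w ⟨s.1 - 1, Nat.lt_of_le_of_lt (Nat.sub_le _ _) s.2⟩ = Fin.last d

def PsiM (w : Fin m → Fin (d + 1)) (z : Fin m → Fin d) : Fin m → Fin (d + 1) :=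
  fun s => if isS w s then Fin.castSucc (z s) else w s

def redu (x : Fin m → Fin (d + 1)) : Fin m → Fin (d + 1) :=
  fun s => if isS x s then 0 else x s

def GoodT (x : Fin m → Fin (d + 1)) : Prop := ∀ s, isS x s → x s ≠ Fin.last d

def NormT (w : Fin m → Fin (d + 1)) : Prop := ∀ s, isS w s → w s = 0

def Sset (w : Fin m → Fin (d + 1)) : Finset (Fin m) := Finset.univ.filter (isS w)

def extr (hd : 0 < d) (x : Fin m → Fin (d + 1)) : Fin m → Fin d :=
  fun s => if h : (x s).1 < d then ⟨(x s).1, h⟩ else ⟨0, hd⟩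

lemma zero_ne_last (hd : 0 < d) : (0 : Fin (d + 1)) ≠ Fin.last d := by
  simp [fin_eq_last_iff]
  omega

lemma isS_congr {w w' : Fin m → Fin (d + 1)}
    (h : ∀ s, w s = Fin.last d ↔ w' s = Fin.last d) (s : Fin m) : isS w s ↔ isS w' s := by
  unfold isS
  rw [h]

lemma psiM_last (hd : 0 < d) {w : Fin m → Fin (d + 1)} (hw : NormT w) (z : Fin m → Fin d)
    (s : Fin m) : PsiM w z s = Fin.last d ↔ w s = Fin.last d := by
  unfold PsiM
  split
  · next h =>
      constructor
      · intro hc; exact absurd hc (Fin.castSucc_lt_last _).ne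
      · intro hc; exact absurd hc (by rw [hw s h]; exact zero_ne_last hd)
  · exact Iff.rfl

lemma redu_last (hd : 0 < d) {x : Fin m → Fin (d + 1)} (hx : GoodT x) (s : Fin m) :
    redu x s = Fin.last d ↔ x s = Fin.last d := by
  unfold redu
  split
  · next h =>
      constructor
      · intro hc; exact absurd hc (zero_ne_last hd)
      · intro hc; exact absurd hc (hx s h)
  · exact Iff.rfl

lemma NormT.good (hd : 0 < d) {w : Fin m → Fin (d + 1)} (hw : NormT w) : GoodT w :=
  fun s hs => by rw [hw s hs]; exact zero_ne_last hd

lemma GoodT_PsiM (hd : 0 < d) {w : Fin m → Fin (d + 1)} (hw : NormT w) (z : Fin m → Fin d) :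
    GoodT (PsiM w z) := by
  intro s hs
  have hs' : isS w s := (isS_congr (psiM_last hd hw z) s).1 hs
  unfold PsiM
  rw [if_pos hs']
  exact (Fin.castSucc_lt_last _).ne

lemma NormT_redu (hd : 0 < d) {x : Fin m → Fin (d + 1)} (hx : GoodT x) : NormT (redu x) := by
  intro s hs
  have hs' : isS x s := (isS_congr (redu_last hd hx) s).1 hs
  unfold redu
  rw [if_pos hs']

lemma Nlast_congr {x x' : Fin m → Fin (d + 1)}
    (h : ∀ s, x s = Fin.last d ↔ x' s = Fin.last d) : Nlast d m x = Nlast d m x' := by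
  unfold Nlast
  apply congrArg Finset.card
  ext t
  simp only [Finset.mem_filter, Finset.mem_univ, true_and]
  rw [← fin_eq_last_iff, ← fin_eq_last_iff, h]

lemma Nlast_PsiM (hd : 0 < d) {w : Fin m → Fin (d + 1)} (hw : NormT w) (z : Fin m → Fin d) :
    Nlast d m (PsiM w z) = Nlast d m w := Nlast_congr (psiM_last hd hw z)

lemma Nlast_redu (hd : 0 < d) {x : Fin m → Fin (d + 1)} (hx : GoodT x) :
    Nlast d m (redu x) = Nlast d m x := Nlast_congr (redu_last hd hx)

lemma redu_PsiM (hd : 0 < d) {w : Fin m → Fin (d + 1)} (hw : NormT w) (z : Fin m → Fin d) :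
    redu (PsiM w z) = w := by
  funext s
  unfold redu
  by_cases h : isS (PsiM w z) s
  · rw [if_pos h]
    exact (hw s ((isS_congr (psiM_last hd hw z) s).1 h)).symm
  · rw [if_neg h]
    have h' : ¬ isS w s := fun hc => h ((isS_congr (psiM_last hd hw z) s).2 hc)
    unfold PsiM
    rw [if_neg h']

lemma PsiM_extr (hd : 0 < d) {x : Fin m → Fin (d + 1)} (hx : GoodT x) :
    PsiM (redu x) (extr hd x) = x := by
  funext s
  unfold PsiM
  by_cases h : isS (redu x) s
  · rw [if_pos h]
    have hs : isS x s := (isS_congr (redu_last hd hx) s).1 h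
    have hne : x s ≠ Fin.last d := hx s hs
    have hlt : (x s).1 < d := by
      have := (x s).2
      have : (x s).1 ≠ d := fun e => hne ((fin_eq_last_iff _).mpr e)
      omega
    apply Fin.ext
    simp [extr, hlt]
  · rw [if_neg h]
    have h' : ¬ isS x s := fun hc => h ((isS_congr (redu_last hd hx) s).2 hc)
    unfold redu
    rw [if_neg h']

lemma PsiM_eq_iff (hd : 0 < d) {x : Fin m → Fin (d + 1)} (hx : GoodT x)
    (z : Fin m → Fin d) :
    PsiM (redu x) z = x ↔ ∀ s ∈ Sset (redu x), z s = extr hd x s := by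
  have hiff : ∀ s, isS (redu x) s ↔ isS x s := isS_congr (redu_last hd hx)
  constructor
  · intro hpz s hs
    simp only [Sset, Finset.mem_filter] at hs
    have hsw : isS (redu x) s := hs.2
    have hcs : Fin.castSucc (z s) = x s := by
      rw [← hpz]; unfold PsiM; rw [if_pos hsw]
    have hxs : (x s).1 < d := by rw [← hcs]; exact (z s).2
    unfold extr
    rw [dif_pos hxs]
    apply Fin.ext
    simp [← hcs]
  · intro hz
    funext s
    unfold PsiM
    by_cases hsw : isS (redu x) s
    · rw [if_pos hsw, hz s (by rw [Sset, Finset.mem_filter]; exact ⟨Finset.mem_univ _, hsw⟩)]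
      have hne : x s ≠ Fin.last d := hx s ((hiff s).1 hsw)
      have hlt : (x s).1 < d := by
        have := (x s).2
        have : (x s).1 ≠ d := fun e => hne ((fin_eq_last_iff _).mpr e)
        omega
      apply Fin.ext
      simp [extr, hlt]
    · rw [if_neg hsw]
      have h' : ¬ isS x s := fun hc => hsw ((hiff s).2 hc)
      unfold redu
      rw [if_neg h']

lemma card_cyl (S : Finset (Fin m)) (c : Fin m → Fin d) :
    (Finset.univ.filter fun z : Fin m → Fin d => ∀ s ∈ S, z s = c s).card
      = d ^ (m - S.card) := by
  classical
  rw [Finset.card_filter]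
  have h1 : ∀ z : Fin m → Fin d,
      (if (∀ s ∈ S, z s = c s) then (1:ℕ) else 0) = ∏ s ∈ S, (if z s = c s then 1 else 0) :=
    fun z => by simp [Finset.prod_boole]
  simp_rw [h1]
  have h2 : ∀ z : Fin m → Fin d,
      (∏ s ∈ S, (if z s = c s then (1:ℕ) else 0))
        = ∏ s : Fin m, (if s ∈ S then (if z s = c s then 1 else 0) else 1) := by
    intro z
    rw [Finset.prod_ite_mem Finset.univ S (fun s => if z s = c s then (1:ℕ) else 0),
      Finset.univ_inter]
  simp_rw [h2]
  rw [← Fintype.piFinset_univ, ← Finset.prod_univ_sum (fun _ => Finset.univ)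
    (fun (s : Fin m) (j : Fin d) => if s ∈ S then (if j = c s then (1:ℕ) else 0) else 1)]
  have h3 : ∀ s : Fin m,
      (∑ j : Fin d, if s ∈ S then (if j = c s then (1:ℕ) else 0) else 1)
        = if s ∈ S then 1 else d := by
    intro s
    by_cases hs : s ∈ S
    · simp [hs]
    · simp [hs, Finset.card_univ]
  rw [Finset.prod_congr rfl (fun s _ => h3 s), Finset.prod_ite, Finset.prod_const,
    Finset.prod_const, one_pow, one_mul]
  congr 1
  rw [Finset.filter_not, Finset.filter_mem_eq_inter, Finset.univ_inter,
    Finset.card_sdiff_of_subset (Finset.subset_univ S), Finset.card_univ, Fintype.card_fin]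


def Aw (d : ℕ) (ps : ℝ) {m : ℕ} (w : Fin m → Fin (d + 1)) : ℝ :=
  (if h : 0 < m then pInit d ps (w ⟨0, h⟩) else 1) *
    ∏ t : Fin (m - 1),
      (if w ⟨t.1, by have h2 := t.2; omega⟩ = Fin.last d then 1
        else pInit d ps (w ⟨t.1 + 1, by have h2 := t.2; omega⟩))

lemma pInit_nonneg {ps : ℝ} (hps : 0 ≤ ps) (hps1 : ps ≤ 1) (j : Fin (d + 1)) :
    0 ≤ pInit d ps j := by
  unfold pInit
  split
  · exact hps
  · apply div_nonneg (by linarith) (by positivity)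

lemma Aw_nonneg {ps : ℝ} (hps : 0 ≤ ps) (hps1 : ps ≤ 1) (w : Fin m → Fin (d + 1)) :
    0 ≤ Aw d ps w := by
  unfold Aw
  apply mul_nonneg
  · split
    · exact pInit_nonneg hps hps1 _
    · norm_num
  · apply Finset.prod_nonneg
    intro t _
    split
    · norm_num
    · exact pInit_nonneg hps hps1 _

lemma traj_factor (hd : 0 < d) (ps : ℝ) (η : Fin d → ℝ) {w : Fin m → Fin (d + 1)}
    (hw : NormT w) (z : Fin m → Fin d) :
    trajP (MG d ps η) (pInit d ps) (PsiM w z) = Aw d ps w * ∏ s ∈ Sset w, η (z s) := by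
  unfold trajP Aw
  have hhead : (if h : 0 < m then pInit d ps (PsiM w z ⟨0, h⟩) else 1)
      = (if h : 0 < m then pInit d ps (w ⟨0, h⟩) else 1) := by
    split
    · next h =>
        congr 1
        unfold PsiM
        rw [if_neg]
        intro hc
        exact absurd hc.1 (by simp)
    · rfl
  rw [hhead, mul_assoc]
  congr 1
  have hfac : ∀ t : Fin (m - 1),
      MG d ps η (PsiM w z ⟨t.1, by have h2 := t.2; omega⟩)
          (PsiM w z ⟨t.1 + 1, by have h2 := t.2; omega⟩)
        = (if w ⟨t.1, by have h2 := t.2; omega⟩ = Fin.last d then 1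
            else pInit d ps (w ⟨t.1 + 1, by have h2 := t.2; omega⟩)) *
          (if w ⟨t.1, by have h2 := t.2; omega⟩ = Fin.last d
            then η (z ⟨t.1 + 1, by have h2 := t.2; omega⟩) else 1) := by
    intro t
    have hm : t.1 < m - 1 := t.2
    set s : Fin m := ⟨t.1, by omega⟩ with hs
    set s' : Fin m := ⟨t.1 + 1, by omega⟩ with hs'
    have hprev : (⟨s'.1 - 1, Nat.lt_of_le_of_lt (Nat.sub_le _ _) s'.2⟩ : Fin m) = s := by
      apply Fin.ext; simp [hs, hs']
    by_cases hws : w s = Fin.last d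
    · have hnotS : ¬ isS w s := by
        intro h
        have h0 := hw s h
        rw [h0] at hws
        exact zero_ne_last hd hws
      have hS' : isS w s' := by
        refine ⟨by simp [hs'], ?_⟩
        rw [hprev]
        exact hws
      rw [if_pos hws, if_pos hws, one_mul]
      have e1 : PsiM w z s = w s := by unfold PsiM; rw [if_neg hnotS]
      have e2 : PsiM w z s' = Fin.castSucc (z s') := by unfold PsiM; rw [if_pos hS']
      rw [e1, e2, hws]
      have hrow : (Fin.last d).1 = d := Fin.val_last d
      have hcol : (Fin.castSucc (z s')).1 ≠ d := by
        have := (z s').2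
        simp only [Fin.coe_castSucc]
        omega
      simp only [MG, Matrix.of_apply, hrow, if_pos rfl, dif_neg hcol, if_true]
      congr 1
      try (apply Fin.ext; simp)
    · have hnotS' : ¬ isS w s' := by
        intro h
        obtain ⟨-, h2⟩ := h
        rw [hprev] at h2
        exact hws h2
      have e2 : PsiM w z s' = w s' := by unfold PsiM; rw [if_neg hnotS']
      rw [if_neg hws, if_neg hws, mul_one]
      have hrow : (PsiM w z s).1 ≠ d := by
        unfold PsiM
        split
        · have := (z s).2
          simp only [Fin.coe_castSucc]
          omega
        · intro e
          exact hws ((fin_eq_last_iff _).mpr e)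
      rw [e2]
      simp only [MG, Matrix.of_apply, if_neg hrow]
  rw [Finset.prod_congr rfl (fun t _ => hfac t), Finset.prod_mul_distrib]
  congr 1
  rw [← Finset.prod_filter]
  refine Finset.prod_bij
    (fun (t : Fin (m - 1)) (_ : t ∈ Finset.univ.filter
      (fun t : Fin (m-1) => w ⟨t.1, by have h2 := t.2; omega⟩ = Fin.last d)) =>
        (⟨t.1 + 1, by have h2 := t.2; omega⟩ : Fin m)) ?_ ?_ ?_ ?_
  · intro t ht
    rw [Finset.mem_filter] at ht
    rw [Sset, Finset.mem_filter]
    refine ⟨Finset.mem_univ _, ⟨by simp, ?_⟩⟩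
    convert ht.2 using 2
    try (apply Fin.ext; simp)
  · intro t1 h1 t2 h2 he
    apply Fin.ext
    have := Fin.mk.injEq .. ▸ he
    simpa using this
  · intro b hb
    rw [Sset, Finset.mem_filter] at hb
    obtain ⟨-, hb1, hb2⟩ := hb
    refine ⟨⟨b.1 - 1, by have := b.2; omega⟩, ?_, ?_⟩
    · rw [Finset.mem_filter]
      refine ⟨Finset.mem_univ _, ?_⟩
      convert hb2 using 2
      try (apply Fin.ext; simp)
    · apply Fin.ext
      show b.1 - 1 + 1 = b.1
      omega
  · intro t ht
    rfl

lemma traj_bad (ps : ℝ) (η : Fin d → ℝ) {x : Fin m → Fin (d + 1)} (hx : ¬ GoodT x) :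
    trajP (MG d ps η) (pInit d ps) x = 0 := by
  unfold GoodT at hx
  push_neg at hx
  obtain ⟨s, hs, hlast⟩ := hx
  unfold trajP
  apply mul_eq_zero_of_right
  have hs1 : 0 < s.1 := hs.1
  have hsm : s.1 - 1 < m - 1 := by have := s.2; omega
  set t : Fin (m - 1) := ⟨s.1 - 1, hsm⟩ with ht
  apply Finset.prod_eq_zero (Finset.mem_univ t)
  have hv1 : (⟨t.1, by have h2 := t.2; omega⟩ : Fin m)
      = (⟨s.1 - 1, Nat.lt_of_le_of_lt (Nat.sub_le _ _) s.2⟩ : Fin m) := by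
    apply Fin.ext; rfl
  have hv2 : (⟨t.1 + 1, by have h2 := t.2; omega⟩ : Fin m) = s := by
    apply Fin.ext
    show s.1 - 1 + 1 = s.1
    omega
  rw [hv1, hv2, hs.2, hlast]
  simp [MG, Fin.val_last]

def Aset (d m n : ℕ) : Finset (Fin m → Fin (d + 1)) :=
  Finset.univ.filter (fun x => Nlast d m x = n ∧ GoodT x)

def Bset (d m n : ℕ) : Finset (Fin m → Fin (d + 1)) :=
  Finset.univ.filter (fun w => Nlast d m w = n ∧ NormT w)

lemma fiber_sum (hd : 0 < d) {n : ℕ} {w : Fin m → Fin (d + 1)} (hwB : w ∈ Bset d m n)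
    (G : (Fin m → Fin (d + 1)) → ℝ) :
    ∑ z : Fin m → Fin d, G (PsiM w z)
      = (d : ℝ) ^ (m - (Sset w).card) * ∑ x ∈ (Aset d m n).filter (fun x => redu x = w), G x := by
  simp only [Bset, Finset.mem_filter] at hwB
  obtain ⟨-, hwN, hwNorm⟩ := hwB
  have hmem : ∀ z : Fin m → Fin d,
      PsiM w z ∈ (Aset d m n).filter (fun x => redu x = w) := by
    intro z
    simp only [Finset.mem_filter, Aset]
    exact ⟨⟨Finset.mem_univ _, by rw [Nlast_PsiM hd hwNorm]; exact hwN, GoodT_PsiM hd hwNorm z⟩,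
      redu_PsiM hd hwNorm z⟩
  calc ∑ z : Fin m → Fin d, G (PsiM w z)
      = ∑ z : Fin m → Fin d, ∑ x ∈ (Aset d m n).filter (fun x => redu x = w),
          (if x = PsiM w z then G x else 0) := by
        refine Finset.sum_congr rfl fun z _ => ?_
        rw [Finset.sum_ite_eq' ((Aset d m n).filter (fun x => redu x = w)) (PsiM w z) G,
          if_pos (hmem z)]
    _ = ∑ x ∈ (Aset d m n).filter (fun x => redu x = w), ∑ z : Fin m → Fin d,
          (if x = PsiM w z then G x else 0) := Finset.sum_comm
    _ = ∑ x ∈ (Aset d m n).filter (fun x => redu x = w), (d : ℝ) ^ (m - (Sset w).card) * G x := by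
        refine Finset.sum_congr rfl fun x hx => ?_
        simp only [Finset.mem_filter, Aset] at hx
        obtain ⟨⟨-, hxN, hxG⟩, hxr⟩ := hx
        have hcond : ∀ z : Fin m → Fin d,
            (x = PsiM w z) ↔ (∀ s ∈ Sset w, z s = extr hd x s) := by
          intro z
          rw [eq_comm, ← hxr]
          exact PsiM_eq_iff hd hxG z
        rw [Finset.sum_congr rfl (fun z _ => if_congr (hcond z) rfl rfl), ← Finset.sum_filter,
          Finset.sum_const, card_cyl (Sset w) (extr hd x), nsmul_eq_mul]
        push_cast
        ring
    _ = (d : ℝ) ^ (m - (Sset w).card) * ∑ x ∈ (Aset d m n).filter (fun x => redu x = w), G x :=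
        (Finset.mul_sum _ _ _).symm

lemma event_sum (hd : 0 < d) (n : ℕ) (G : (Fin m → Fin (d + 1)) → ℝ)
    (hGbad : ∀ x, ¬ GoodT x → G x = 0) :
    ∑ x ∈ Finset.univ.filter (fun x : Fin m → Fin (d + 1) => Nlast d m x = n), G x
      = ∑ w ∈ Bset d m n, ∑ x ∈ (Aset d m n).filter (fun x => redu x = w), G x := by
  have hmaps : ∀ x ∈ Aset d m n, redu x ∈ Bset d m n := by
    intro x hx
    simp only [Aset, Finset.mem_filter] at hx
    simp only [Bset, Finset.mem_filter]
    exact ⟨Finset.mem_univ _, by rw [Nlast_redu hd hx.2.2]; exact hx.2.1, NormT_redu hd hx.2.2⟩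
  rw [Finset.sum_fiberwise_of_maps_to hmaps G]
  refine (Finset.sum_subset ?_ ?_).symm
  · intro x hx
    simp only [Aset, Finset.mem_filter] at hx
    rw [Finset.mem_filter]
    exact ⟨Finset.mem_univ _, hx.2.1⟩
  · intro x hx1 hx2
    apply hGbad
    simp only [Aset, Finset.mem_filter] at hx2
    rw [Finset.mem_filter] at hx1
    intro hG
    exact hx2 ⟨Finset.mem_univ _, hx1.2, hG⟩

lemma card_Sset_le {n : ℕ} {w : Fin m → Fin (d + 1)} (hwN : Nlast d m w = n) :
    (Sset w).card ≤ n := by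
  rw [← hwN]
  unfold Nlast Sset
  apply Finset.card_le_card_of_injOn
    (fun s => ⟨s.1 - 1, Nat.lt_of_le_of_lt (Nat.sub_le _ _) s.2⟩)
  · intro s hs
    rw [Finset.mem_coe, Finset.mem_filter] at hs
    rw [Finset.mem_coe, Finset.mem_filter]
    exact ⟨Finset.mem_univ _, (fin_eq_last_iff _).mp hs.2.2⟩
  · intro s1 h1 s2 h2 he
    simp only [Finset.coe_filter, Set.mem_setOf_eq] at h1 h2
    have e1 := h1.2.1
    have e2 := h2.2.1
    apply Fin.ext
    have : s1.1 - 1 = s2.1 - 1 := congrArg Fin.val he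
    omega

end AuxDecoupling

/-- Decoupling: the TV distance between the conditional trajectory laws given
`N_{d+1} = n` is at most the TV distance between the product distributions
`η₁^{⊗n}` and `η₂^{⊗n}`. -/
theorem tv_cond_eq_le_tv_product
    (d m : ℕ) (hd : 2 ≤ d) (ps : ℝ) (hps : 0 < ps) (hps2 : ps ≤ 1 / (2 * ((d : ℝ) + 1)))
    (η₁ η₂ : Fin d → ℝ) (h1 : IsDist η₁) (h2 : IsDist η₂)
    (n : ℕ) (hn1 : 1 ≤ n) (hn2 : 2 * n ≤ m + 1) :
    tvDist (condP (m := m) ps η₁ (fun x => Nlast d m x = n))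
        (condP (m := m) ps η₂ (fun x => Nlast d m x = n)) ≤
      tvDist (prodP η₁ n) (prodP η₂ n) := by
  classical
  have hd1 : 0 < d := by omega
  have hps0 : 0 ≤ ps := le_of_lt hps
  have hps1 : ps ≤ 1 := by
    have hd0 : (0:ℝ) ≤ (d:ℝ) := Nat.cast_nonneg d
    calc ps ≤ 1 / (2 * ((d:ℝ) + 1)) := hps2
      _ ≤ 1 := by
        rw [div_le_one (by nlinarith)]
        nlinarith
  have hZeq : ∀ η : Fin d → ℝ, (∑ i, η i = 1) →
      (∑ y : Fin m → Fin (d+1),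
        if Nlast d m y = n then trajP (MG d ps η) (pInit d ps) y else 0)
        = ∑ w ∈ Bset d m n, Aw d ps w := by
    intro η hη
    rw [← Finset.sum_filter, event_sum hd1 n _ (fun x hx => traj_bad ps η hx)]
    refine Finset.sum_congr rfl fun w hw => ?_
    have hNw : NormT w := by
      simp only [Bset, Finset.mem_filter] at hw; exact hw.2.2
    have hfib := fiber_sum hd1 hw (trajP (MG d ps η) (pInit d ps))
    have hsum : ∑ z : Fin m → Fin d, trajP (MG d ps η) (pInit d ps) (PsiM w z)
        = Aw d ps w * (d:ℝ) ^ (m - (Sset w).card) := by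
      rw [Finset.sum_congr rfl fun z _ => traj_factor hd1 ps η hNw z, ← Finset.mul_sum,
        sum_prod_S (Sset w) η hη]
    have hD : ((d:ℝ)) ^ (m - (Sset w).card) ≠ 0 := by positivity
    apply mul_left_cancel₀ hD
    rw [← hfib, hsum]
    ring
  set Zb := ∑ w ∈ Bset d m n, Aw d ps w with hZb
  have hZnn : 0 ≤ Zb := Finset.sum_nonneg fun w _ => Aw_nonneg hps0 hps1 w
  have hcond : ∀ (η : Fin d → ℝ), (∑ i, η i = 1) → ∀ x : Fin m → Fin (d+1),
      condP (m := m) ps η (fun x => Nlast d m x = n) x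
        = (if Nlast d m x = n then trajP (MG d ps η) (pInit d ps) x else 0) / Zb := by
    intro η hη x
    simp only [condP]
    congr 1
    · congr
    · rw [← hZeq η hη]
      refine Finset.sum_congr rfl fun y _ => ?_
      congr
  have hRHS : tvDist (prodP η₁ n) (prodP η₂ n) = (1/2) * Tk η₁ η₂ n := rfl
  have hLHS : tvDist (condP (m := m) ps η₁ (fun x => Nlast d m x = n))
      (condP (m := m) ps η₂ (fun x => Nlast d m x = n))
      = (1/2) * ∑ x : Fin m → Fin (d+1),
          |(if Nlast d m x = n then trajP (MG d ps η₁) (pInit d ps) x else 0) / Zb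
            - (if Nlast d m x = n then trajP (MG d ps η₂) (pInit d ps) x else 0) / Zb| := by
    unfold tvDist
    congr 1
    refine Finset.sum_congr rfl fun x _ => ?_
    rw [hcond η₁ h1.2 x, hcond η₂ h2.2 x]
  rw [hLHS, hRHS]
  by_cases hZ0 : Zb = 0
  · have hT := Tk_nonneg η₁ η₂ n
    simp only [hZ0, div_zero, sub_zero, abs_zero, Finset.sum_const_zero, mul_zero]
    linarith
  · have hZpos : 0 < Zb := lt_of_le_of_ne hZnn (Ne.symm hZ0)
    have habs : ∑ x : Fin m → Fin (d+1),
        |(if Nlast d m x = n then trajP (MG d ps η₁) (pInit d ps) x else 0) / Zb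
          - (if Nlast d m x = n then trajP (MG d ps η₂) (pInit d ps) x else 0) / Zb|
        = (∑ x : Fin m → Fin (d+1),
            |(if Nlast d m x = n then trajP (MG d ps η₁) (pInit d ps) x else 0)
              - (if Nlast d m x = n then trajP (MG d ps η₂) (pInit d ps) x else 0)|) / Zb := by
      rw [Finset.sum_div]
      refine Finset.sum_congr rfl fun x _ => ?_
      rw [div_sub_div_same, abs_div, abs_of_pos hZpos]
    have hptw : ∀ x : Fin m → Fin (d+1),
        |(if Nlast d m x = n then trajP (MG d ps η₁) (pInit d ps) x else 0)
          - (if Nlast d m x = n then trajP (MG d ps η₂) (pInit d ps) x else 0)|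
        = (if Nlast d m x = n
            then |trajP (MG d ps η₁) (pInit d ps) x - trajP (MG d ps η₂) (pInit d ps) x|
            else 0) := by
      intro x
      split <;> simp
    have hnum : ∑ x : Fin m → Fin (d+1),
        |(if Nlast d m x = n then trajP (MG d ps η₁) (pInit d ps) x else 0)
          - (if Nlast d m x = n then trajP (MG d ps η₂) (pInit d ps) x else 0)|
        = ∑ w ∈ Bset d m n, Aw d ps w * Tk η₁ η₂ (Sset w).card := by
      rw [Finset.sum_congr rfl fun x _ => hptw x, ← Finset.sum_filter,
        event_sum hd1 n _ (fun x hx => by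
          rw [traj_bad ps η₁ hx, traj_bad ps η₂ hx, sub_zero, abs_zero])]
      refine Finset.sum_congr rfl fun w hw => ?_
      have hNw : NormT w := by
        simp only [Bset, Finset.mem_filter] at hw; exact hw.2.2
      have hfib := fiber_sum hd1 hw (fun x =>
        |trajP (MG d ps η₁) (pInit d ps) x - trajP (MG d ps η₂) (pInit d ps) x|)
      have hsum : ∑ z : Fin m → Fin d,
          |trajP (MG d ps η₁) (pInit d ps) (PsiM w z)
            - trajP (MG d ps η₂) (pInit d ps) (PsiM w z)|
          = Aw d ps w * ((d:ℝ) ^ (m - (Sset w).card) * Tk η₁ η₂ (Sset w).card) := by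
        have hz : ∀ z : Fin m → Fin d,
            |trajP (MG d ps η₁) (pInit d ps) (PsiM w z)
              - trajP (MG d ps η₂) (pInit d ps) (PsiM w z)|
            = Aw d ps w * |(∏ s ∈ Sset w, η₁ (z s)) - ∏ s ∈ Sset w, η₂ (z s)| := by
          intro z
          rw [traj_factor hd1 ps η₁ hNw z, traj_factor hd1 ps η₂ hNw z, ← mul_sub, abs_mul,
            abs_of_nonneg (Aw_nonneg hps0 hps1 w)]
        rw [Finset.sum_congr rfl fun z _ => hz z, ← Finset.mul_sum, U_eq (Sset w) η₁ η₂]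
      have hD : ((d:ℝ)) ^ (m - (Sset w).card) ≠ 0 := by positivity
      apply mul_left_cancel₀ hD
      rw [← hfib, hsum]
      ring
    have hbound : ∑ w ∈ Bset d m n, Aw d ps w * Tk η₁ η₂ (Sset w).card ≤ Zb * Tk η₁ η₂ n := by
      rw [hZb, Finset.sum_mul]
      refine Finset.sum_le_sum fun w hw => ?_
      have hwN : Nlast d m w = n := by
        simp only [Bset, Finset.mem_filter] at hw; exact hw.2.1
      exact mul_le_mul_of_nonneg_left
        (Tk_mono η₁ η₂ h1.2 h2.2 (card_Sset_le hwN)) (Aw_nonneg hps0 hps1 w)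
    rw [habs, hnum]
    calc (1/2 : ℝ) * ((∑ w ∈ Bset d m n, Aw d ps w * Tk η₁ η₂ (Sset w).card) / Zb)
        ≤ (1/2) * ((Zb * Tk η₁ η₂ n) / Zb) := by
          apply mul_le_mul_of_nonneg_left _ (by norm_num : (0:ℝ) ≤ 1/2)
          exact (div_le_div_iff_of_pos_right hZpos).mpr hbound
      _ = (1/2) * Tk η₁ η₂ n := by
          rw [mul_div_cancel_left₀ _ hZ0]

end
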